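/- In the platform-choice game, the fully integrated state ω_mm = (0, 0), in which every agent is on platform ℓ, is a Nash equilibrium (no agent strictly gains by unilaterally moving to platform m, where the deviator's payoff is evaluated at the post-deviation state) if and only if 1 − γ_A ≥ (N^B/(N^A − 1))·δ and 1 − γ_B ≥ (N^A/(N^B − 1))·δ. -/
import Mathlib


/-- Utility of a Group A agent on platform m at state (nAm, nBm). -/
noncomputable def UAm (γA δ nAm nBm : ℝ) : ℝ := (nAm - 1) * γA - nBm * δ

/-- Utility of a Group A agent on platform ℓ at state (nAm, nBm). -/
noncomputable def UAl (NA NB γA δ nAm nBm : ℝ) : ℝ :=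
  (NA - nAm - 1) * (1 - γA) - (NB - nBm) * δ

/-- Utility of a Group B agent on platform m at state (nAm, nBm). -/
noncomputable def UBm (γB δ nAm nBm : ℝ) : ℝ := -nAm * δ + (nBm - 1) * γB

/-- Utility of a Group B agent on platform ℓ at state (nAm, nBm). -/
noncomputable def UBl (NA NB γB δ nAm nBm : ℝ) : ℝ :=
  -(NA - nAm) * δ + (NB - nBm - 1) * (1 - γB)

/-- The fully integrated state ω_mm = (0, 0) (everyone on ℓ) is a Nash
equilibrium (no agent strictly gains by unilaterally moving to m, the
deviator's payoff evaluated at the post-deviation state) if and only if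
1 − γ_A ≥ (N^B/(N^A − 1))·δ and 1 − γ_B ≥ (N^A/(N^B − 1))·δ. -/
theorem omega_mm_equilibrium_iff
    (NA NB : ℕ) (hNA : 2 ≤ NA) (hNB : 2 ≤ NB)
    (γA γB δ : ℝ) (hγA : γA ∈ Set.Ioo (1/2 : ℝ) 1) (hγB : γB ∈ Set.Ioo (1/2 : ℝ) 1)
    (hδ : 0 < δ) :
    (UAm γA δ 1 0 ≤ UAl NA NB γA δ 0 0 ∧
      UBm γB δ 0 1 ≤ UBl NA NB γB δ 0 0) ↔
    (1 - γA ≥ ((NB : ℝ) / ((NA : ℝ) - 1)) * δ ∧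
      1 - γB ≥ ((NA : ℝ) / ((NB : ℝ) - 1)) * δ) := by
  have hA : (0:ℝ) < (NA:ℝ) - 1 := by
    have : (2:ℝ) ≤ (NA:ℝ) := by exact_mod_cast hNA
    linarith
  have hB : (0:ℝ) < (NB:ℝ) - 1 := by
    have : (2:ℝ) ≤ (NB:ℝ) := by exact_mod_cast hNB
    linarith
  simp only [UAm, UAl, UBm, UBl]
  rw [ge_iff_le, ge_iff_le, div_mul_eq_mul_div, div_le_iff₀ hA,
    div_mul_eq_mul_div, div_le_iff₀ hB]
  constructor <;> rintro ⟨h1, h2⟩ <;> constructor <;> nlinarith
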